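/- arXiv:1702.04951 — 2 statements merged into one kernel-verified Lean document; each statement's English description precedes it below -/
import Mathlib

section
/- Let H be a complex inner product space, and let D, B : H → H be linear maps that are symmetric (⟨Dx, y⟩ = ⟨x, Dy⟩ and ⟨Bx, y⟩ = ⟨x, By⟩ for all x, y). Assume that ‖Bs‖ = ‖s‖ for all s ∈ H, and that there is a constant C > 0 such that ‖(D ∘ B + B ∘ D)s‖ ≤ C‖s‖ for all s ∈ H. Then for every real ε with 0 < ε ≤ 1/(2C) and every s ∈ H, one has ‖(D + ε⁻¹ B)s‖² ≥ ‖Ds‖² + (1/(2ε²))‖s‖². (This is the abstract spectral estimate underlying Proposition 3.3 — invertibility of the deformed boundary operator D^{∂ℳ_R}_ε — and the interior estimate (3.16) of Proposition 4.4 in the paper: a symmetric operator deformed by a large multiple of a symmetric isometry with bounded anticommutator has a spectral gap of order 1/ε.) -/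
/-- Abstract spectral estimate: if `D` and `B` are symmetric operators on a complex inner
product space, `B` is an isometry, and the anticommutator `DB + BD` is bounded by `C > 0`,
then for `0 < ε ≤ 1/(2C)` the deformed operator `D + ε⁻¹B` satisfies
`‖(D + ε⁻¹B)s‖² ≥ ‖Ds‖² + (1/(2ε²))‖s‖²`. -/
theorem deformed_operator_spectral_gap {H : Type*} [NormedAddCommGroup H]
    [InnerProductSpace ℂ H] (D B : H →ₗ[ℂ] H)
    (hD : D.IsSymmetric) (hB : B.IsSymmetric)
    (hBiso : ∀ s : H, ‖B s‖ = ‖s‖)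
    (C : ℝ) (hC : 0 < C)
    (hanti : ∀ s : H, ‖(D ∘ₗ B + B ∘ₗ D) s‖ ≤ C * ‖s‖)
    (ε : ℝ) (hε : 0 < ε) (hεC : ε ≤ 1 / (2 * C)) (s : H) :
    ‖(D + ε⁻¹ • B) s‖ ^ 2 ≥ ‖D s‖ ^ 2 + (1 / (2 * ε ^ 2)) * ‖s‖ ^ 2 := by
  have happ : (D + ε⁻¹ • B) s = D s + ε⁻¹ • B s := rfl
  set r : ℝ := RCLike.re (inner ℂ (D s) (B s) : ℂ) with hr
  -- cross term bound
  have hcross : 2 * r = RCLike.re (inner ℂ s ((D ∘ₗ B + B ∘ₗ D) s) : ℂ) := by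
    have h1 : (inner ℂ (D s) (B s) : ℂ) = inner ℂ s (D (B s)) := hD s (B s)
    have h2 : (inner ℂ (B s) (D s) : ℂ) = inner ℂ s (B (D s)) := hB s (D s)
    have h3 : RCLike.re (inner ℂ (B s) (D s) : ℂ) = r := by
      rw [hr]
      exact inner_re_symm (B s) (D s)
    simp only [LinearMap.add_apply, LinearMap.comp_apply, inner_add_right]
    rw [map_add, ← h1, ← h2, h3]
    ring
  have hbound : |2 * r| ≤ C * ‖s‖ ^ 2 := by
    rw [hcross]
    calc |RCLike.re (inner ℂ s ((D ∘ₗ B + B ∘ₗ D) s) : ℂ)|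
        ≤ ‖(inner ℂ s ((D ∘ₗ B + B ∘ₗ D) s) : ℂ)‖ := RCLike.abs_re_le_norm _
      _ ≤ ‖s‖ * ‖(D ∘ₗ B + B ∘ₗ D) s‖ := norm_inner_le_norm _ _
      _ ≤ ‖s‖ * (C * ‖s‖) := by
          exact mul_le_mul_of_nonneg_left (hanti s) (norm_nonneg _)
      _ = C * ‖s‖ ^ 2 := by ring
  have hnorm : ‖D s + ε⁻¹ • B s‖ ^ 2
      = ‖D s‖ ^ 2 + 2 * (ε⁻¹ * r) + (ε⁻¹ * ‖s‖) ^ 2 := by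
    rw [@norm_add_sq ℂ]
    have h1 : RCLike.re (inner ℂ (D s) (ε⁻¹ • B s) : ℂ) = ε⁻¹ * r := by
      rw [RCLike.real_smul_eq_coe_smul (K := ℂ), inner_smul_right]
      simp [hr]
    have h2 : ‖ε⁻¹ • B s‖ = ε⁻¹ * ‖s‖ := by
      rw [norm_smul, hBiso, Real.norm_eq_abs, abs_of_pos (inv_pos.mpr hε)]
    rw [h1, h2]
  rw [happ, hnorm]
  have hC' : C ≤ 1 / (2 * ε) := by
    rw [le_div_iff₀ (by positivity)] at hεC ⊢
    linarith
  have habs := abs_le.mp hbound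
  have hεinv : (0:ℝ) < ε⁻¹ := inv_pos.mpr hε
  have key : 2 * (ε⁻¹ * r) ≥ -(ε⁻¹ * (C * ‖s‖ ^ 2)) := by
    have := habs.1
    nlinarith
  have hC2 : ε⁻¹ * (C * ‖s‖ ^ 2) ≤ (1 / (2 * ε ^ 2)) * ‖s‖ ^ 2 := by
    have hs2 : (0:ℝ) ≤ ‖s‖ ^ 2 := by positivity
    have : ε⁻¹ * C ≤ 1 / (2 * ε ^ 2) := by
      rw [div_eq_mul_inv] at hC' ⊢
      have : ε⁻¹ * C ≤ ε⁻¹ * (1 * (2 * ε)⁻¹) := by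
        exact mul_le_mul_of_nonneg_left hC' (le_of_lt hεinv)
      calc ε⁻¹ * C ≤ ε⁻¹ * (1 * (2 * ε)⁻¹) := this
        _ = 1 * (2 * ε ^ 2)⁻¹ := by field_simp
    nlinarith
  have hεsq : (ε⁻¹ * ‖s‖) ^ 2 = ε⁻¹ ^ 2 * ‖s‖ ^ 2 := by ring
  have hfin : ε⁻¹ ^ 2 * ‖s‖ ^ 2 = 2 * ((1 / (2 * ε ^ 2)) * ‖s‖ ^ 2) := by
    field_simp
  linarith
end

section
/- Let H be a complex inner product space, let T : H → H be a linear map, and let a₁, a₂, a₃ : H → H be linear maps satisfying ‖a₁ s‖² + ‖a₂ s‖² + ‖a₃ s‖² = ‖s‖² for every s ∈ H. Then for every s ∈ H, ‖Ts‖² ≥ (1/2) Σ_{i=1}^{3} ‖T(aᵢ s)‖² − Σ_{i=1}^{3} ‖(T ∘ aᵢ − aᵢ ∘ T)s‖². (This is the abstract form of the cut-off inequality (4.12) in the paper, where the aᵢ are multiplication by the functions α₁, α₂, α₃ with α₁² + α₂² + α₃² = 1 and the commutators [T, aᵢ] are the Clifford multiplications c(dαᵢ).) -/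
open scoped BigOperators

/-- Abstract cut-off inequality: if `a₁, a₂, a₃` form a quadratic partition of unity in the
sense that `‖a₁s‖² + ‖a₂s‖² + ‖a₃s‖² = ‖s‖²` for all `s`, then for any linear operator `T`,
`‖Ts‖² ≥ (1/2) Σᵢ ‖T(aᵢ s)‖² − Σᵢ ‖[T, aᵢ]s‖²`. -/
theorem cutoff_inequality {H : Type*} [NormedAddCommGroup H] [InnerProductSpace ℂ H]
    (T : H →ₗ[ℂ] H) (a : Fin 3 → (H →ₗ[ℂ] H))
    (ha : ∀ s : H, ∑ i, ‖a i s‖ ^ 2 = ‖s‖ ^ 2) (s : H) :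
    ‖T s‖ ^ 2 ≥
      (1 / 2) * ∑ i, ‖T (a i s)‖ ^ 2 - ∑ i, ‖(T ∘ₗ a i - a i ∘ₗ T) s‖ ^ 2 := by
  have key : ∀ i : Fin 3, ‖T (a i s)‖ ^ 2 ≤
      2 * ‖(T ∘ₗ a i - a i ∘ₗ T) s‖ ^ 2 + 2 * ‖a i (T s)‖ ^ 2 := by
    intro i
    have h1 : T (a i s) = (T ∘ₗ a i - a i ∘ₗ T) s + a i (T s) := by simp
    rw [h1]
    have h2 := norm_add_le ((T ∘ₗ a i - a i ∘ₗ T) s) (a i (T s))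
    nlinarith [norm_nonneg ((T ∘ₗ a i - a i ∘ₗ T) s), norm_nonneg (a i (T s)),
      norm_nonneg ((T ∘ₗ a i - a i ∘ₗ T) s + a i (T s)),
      sq_nonneg (‖(T ∘ₗ a i - a i ∘ₗ T) s‖ - ‖a i (T s)‖)]
  have hsum : ∑ i, ‖T (a i s)‖ ^ 2 ≤
      2 * ∑ i, ‖(T ∘ₗ a i - a i ∘ₗ T) s‖ ^ 2 + 2 * ‖T s‖ ^ 2 := by
    calc ∑ i, ‖T (a i s)‖ ^ 2
        ≤ ∑ i, (2 * ‖(T ∘ₗ a i - a i ∘ₗ T) s‖ ^ 2 + 2 * ‖a i (T s)‖ ^ 2) :=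
          Finset.sum_le_sum fun i _ => key i
      _ = 2 * ∑ i, ‖(T ∘ₗ a i - a i ∘ₗ T) s‖ ^ 2 + 2 * ∑ i, ‖a i (T s)‖ ^ 2 := by
          rw [Finset.sum_add_distrib, Finset.mul_sum, Finset.mul_sum]
      _ = 2 * ∑ i, ‖(T ∘ₗ a i - a i ∘ₗ T) s‖ ^ 2 + 2 * ‖T s‖ ^ 2 := by rw [ha (T s)]
  linarith
end
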